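/- Let ω = ω_Re + i ω_Im with ω_Re, ω_Im ∈ 𝕊^{n-1} unit vectors and ω_Re · ω_Im = 0. For g ∈ L^∞(ℝⁿ) with compact support contained in the ball B(0,r), define φ(x) = (1/(2π)) ∫_{ℝ²} (1/(y₁ + i y₂)) g(x − y₁ ω_Re − y₂ ω_Im) dy₁ dy₂. Then ‖φ‖_{L^∞(ℝⁿ)} ≤ C ‖g‖_{L^∞(ℝⁿ)} for a constant C depending only on r. -/

import Mathlib

open Complex MeasureTheory

noncomputable section

lemma rpow_neg_half_of_neg {x : ℝ} (hx : x < 0) : x ^ (-(1/2) : ℝ) = 0 := by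
  rw [Real.rpow_def_of_neg hx]
  have : Real.cos (-(1/2) * Real.pi) = 0 := by
    rw [show (-(1/2) : ℝ) * Real.pi = -(Real.pi/2) by ring, Real.cos_neg, Real.cos_pi_div_two]
  rw [this, mul_zero]

lemma abs_rpow_key (t : ℝ) : |t| ^ (-(1/2) : ℝ) = t ^ (-(1/2) : ℝ) + (-t) ^ (-(1/2) : ℝ) := by
  rcases lt_trichotomy t 0 with h | h | h
  · rw [abs_of_neg h, rpow_neg_half_of_neg h]; ring
  · simp [h]
  · rw [abs_of_pos h, rpow_neg_half_of_neg (by linarith : -t < 0)]; ring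

lemma habs_integrableOn (a b : ℝ) :
    IntegrableOn (fun t : ℝ => |t| ^ (-(1/2) : ℝ)) (Set.Icc a b) := by
  rcases le_or_gt a b with hab | hab
  · have h1 : IntervalIntegrable (fun t : ℝ => t ^ (-(1/2) : ℝ)) volume a b :=
      intervalIntegral.intervalIntegrable_rpow' (by norm_num)
    have h2 : IntervalIntegrable (fun t : ℝ => (-t) ^ (-(1/2) : ℝ)) volume a b := by
      have := ((IntervalIntegrable.iff_comp_neg (by simp)).mp
        (intervalIntegral.intervalIntegrable_rpow' (r := -(1/2)) (by norm_num)
          (a := -a) (b := -b)))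
      simpa using this
    have h3 : IntervalIntegrable (fun t : ℝ => |t| ^ (-(1/2) : ℝ)) volume a b := by
      have heq : (fun t : ℝ => |t| ^ (-(1/2) : ℝ))
          = fun t : ℝ => t ^ (-(1/2) : ℝ) + (-t) ^ (-(1/2) : ℝ) := funext abs_rpow_key
      rw [heq]
      exact h1.add h2
    exact (intervalIntegrable_iff_integrableOn_Icc_of_le hab).mp h3
  · simp [Set.Icc_eq_empty_of_lt hab]

lemma bound1D {r : ℝ} (hr : 0 < r) (a : ℝ) :
    ∫ t in Set.Icc (a - r) (a + r), |t| ^ (-(1/2) : ℝ)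
      ≤ (∫ t in Set.Icc (-r) r, |t| ^ (-(1/2) : ℝ)) + r ^ (-(1/2) : ℝ) * (2 * r) := by
  set h : ℝ → ℝ := fun t => |t| ^ (-(1/2) : ℝ) with hh
  set S : Set ℝ := Set.Icc (a - r) (a + r)
  set T : Set ℝ := Set.Icc (-r) r
  have hS : IntegrableOn h S := habs_integrableOn _ _
  have hT : IntegrableOn h T := habs_integrableOn _ _
  have hnonneg : ∀ t : ℝ, 0 ≤ h t := fun t => Real.rpow_nonneg (abs_nonneg t) _
  have hsplit : (∫ t in S ∩ T, h t) + ∫ t in S \ T, h t = ∫ t in S, h t :=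
    integral_inter_add_diff measurableSet_Icc hS
  rw [← hsplit]
  have hA : (∫ t in S ∩ T, h t) ≤ ∫ t in T, h t := by
    apply setIntegral_mono_set hT (Filter.Eventually.of_forall hnonneg)
    exact (Set.inter_subset_right).eventuallyLE
  have hSfin : volume (S \ T) < ⊤ :=
    lt_of_le_of_lt (measure_mono Set.diff_subset) (by rw [Real.volume_Icc]; exact ENNReal.ofReal_lt_top)
  have hB : (∫ t in S \ T, h t) ≤ r ^ (-(1/2) : ℝ) * (2 * r) := by
    have hbd : ∀ t ∈ S \ T, ‖h t‖ ≤ r ^ (-(1/2) : ℝ) := by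
      intro t ht
      have h1 : r < |t| := by
        rcases ht.2 with ht2
        have : t < -r ∨ r < t := by
          by_contra hc
          push_neg at hc
          exact ht2 ⟨hc.1, hc.2⟩
        rcases this with h' | h'
        · rw [abs_of_neg (by linarith)]; linarith
        · rw [abs_of_pos (by linarith)]; linarith
      rw [Real.norm_eq_abs, _root_.abs_of_nonneg (hnonneg t)]
      exact Real.rpow_le_rpow_of_nonpos hr h1.le (by norm_num)
    calc (∫ t in S \ T, h t) ≤ ‖∫ t in S \ T, h t‖ := le_abs_self _
      _ ≤ r ^ (-(1/2) : ℝ) * (volume (S \ T)).toReal :=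
          norm_setIntegral_le_of_norm_le_const hSfin hbd
      _ ≤ r ^ (-(1/2) : ℝ) * (2 * r) := by
          apply mul_le_mul_of_nonneg_left _ (Real.rpow_nonneg hr.le _)
          have h1 : (volume (S \ T)).toReal ≤ (volume S).toReal := by
            apply ENNReal.toReal_mono
            · rw [Real.volume_Icc]; exact ENNReal.ofReal_ne_top
            · exact measure_mono Set.diff_subset
          have h2 : (volume S).toReal = 2 * r := by
            rw [Real.volume_Icc, ENNReal.toReal_ofReal (by linarith)]
            ring_nf
          linarith
  linarith

def NInv {n : ℕ} (ωRe ωIm : EuclideanSpace ℝ (Fin n))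
    (g : EuclideanSpace ℝ (Fin n) → ℂ) (x : EuclideanSpace ℝ (Fin n)) : ℂ :=
  (1 / (2 * Real.pi)) *
    ∫ y : ℝ × ℝ, (1 / ((y.1 : ℂ) + I * (y.2 : ℂ))) * g (x - y.1 • ωRe - y.2 • ωIm)

/-- `L^∞` bound on `φ = N_ω^{-1}(g)` for compactly supported bounded `g`,
with a constant depending only on the radius `r` of the support. -/
theorem stmt_2 {n : ℕ} (r : ℝ) (hr : 0 < r) :
    ∃ C > 0, ∀ (ωRe ωIm : EuclideanSpace ℝ (Fin n)), ‖ωRe‖ = 1 → ‖ωIm‖ = 1 →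
      inner ℝ ωRe ωIm = (0 : ℝ) →
      ∀ (g : EuclideanSpace ℝ (Fin n) → ℂ), Measurable g →
        Function.support g ⊆ Metric.closedBall 0 r →
        ∀ M : ℝ, (∀ x, ‖g x‖ ≤ M) →
          ∀ x, ‖NInv ωRe ωIm g x‖ ≤ C * M := by
  classical
  set h : ℝ → ℝ := fun t => |t| ^ (-(1/2) : ℝ) with hh
  have hnonneg : ∀ t : ℝ, 0 ≤ h t := fun t => Real.rpow_nonneg (abs_nonneg t) _
  set K : ℝ := ∫ t in Set.Icc (-r) r, h t with hK
  have hK0 : 0 ≤ K := setIntegral_nonneg measurableSet_Icc fun t _ => hnonneg t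
  set B : ℝ := K + r ^ (-(1/2) : ℝ) * (2 * r) with hB
  have hBpos : 0 < B := by
    have h0 : 0 < r ^ (-(1/2) : ℝ) * (2 * r) := by positivity
    rw [hB]; linarith
  refine ⟨(1 / (2 * Real.pi)) * (B * B), by positivity, ?_⟩
  intro ωRe ωIm hRe hIm horth g hgm hsupp M hM x
  have hM0 : 0 ≤ M := le_trans (norm_nonneg _) (hM 0)
  set c1 : ℝ := inner ℝ x ωRe with hc1
  set c2 : ℝ := inner ℝ x ωIm with hc2
  set h₁ : ℝ → ℝ := (Set.Icc (c1 - r) (c1 + r)).indicator h with hh1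
  set h₂ : ℝ → ℝ := (Set.Icc (c2 - r) (c2 + r)).indicator h with hh2
  have hh1nn : ∀ t, 0 ≤ h₁ t := fun t => Set.indicator_nonneg (fun s _ => hnonneg s) t
  have hh2nn : ∀ t, 0 ≤ h₂ t := fun t => Set.indicator_nonneg (fun s _ => hnonneg s) t
  have hint1 : Integrable h₁ := (integrable_indicator_iff measurableSet_Icc).2 (habs_integrableOn _ _)
  have hint2 : Integrable h₂ := (integrable_indicator_iff measurableSet_Icc).2 (habs_integrableOn _ _)
  have hintG : Integrable (fun y : ℝ × ℝ => M * (h₁ y.1 * h₂ y.2)) := by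
    apply Integrable.const_mul
    rw [Measure.volume_eq_prod _ _]
    exact hint1.mul_prod hint2
  -- a.e. nonvanishing of coordinates
  have hae1 : ∀ᵐ y : ℝ × ℝ, y.1 ≠ 0 := by
    rw [MeasureTheory.ae_iff]
    have hset : {y : ℝ × ℝ | ¬ y.1 ≠ 0} = ({(0:ℝ)} ×ˢ (Set.univ : Set ℝ)) := by
      ext ⟨a, b⟩; simp [eq_comm]
    rw [hset, Measure.volume_eq_prod _ _, Measure.prod_prod]
    simp
  have hae2 : ∀ᵐ y : ℝ × ℝ, y.2 ≠ 0 := by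
    rw [MeasureTheory.ae_iff]
    have hset : {y : ℝ × ℝ | ¬ y.2 ≠ 0} = ((Set.univ : Set ℝ) ×ˢ ({(0:ℝ)} : Set ℝ)) := by
      ext ⟨a, b⟩; simp [eq_comm]
    rw [hset, Measure.volume_eq_prod _ _, Measure.prod_prod]
    simp
  -- the pointwise a.e. bound
  have hptwise : ∀ᵐ y : ℝ × ℝ,
      ‖(1 / ((y.1 : ℂ) + I * (y.2 : ℂ))) * g (x - y.1 • ωRe - y.2 • ωIm)‖
        ≤ M * (h₁ y.1 * h₂ y.2) := by
    filter_upwards [hae1, hae2] with y hy1 hy2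
    by_cases hg0 : g (x - y.1 • ωRe - y.2 • ωIm) = 0
    · rw [hg0, mul_zero, norm_zero]
      exact mul_nonneg hM0 (mul_nonneg (hh1nn _) (hh2nn _))
    · set z := x - y.1 • ωRe - y.2 • ωIm with hz
      have hzr : ‖z‖ ≤ r := by
        have := hsupp (Function.mem_support.2 hg0)
        simpa [mem_closedBall_zero_iff] using this
      have hRR : (inner ℝ ωRe ωRe : ℝ) = 1 := by
        rw [real_inner_self_eq_norm_sq, hRe]; norm_num
      have hII : (inner ℝ ωIm ωIm : ℝ) = 1 := by
        rw [real_inner_self_eq_norm_sq, hIm]; norm_num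
      have hIR : (inner ℝ ωIm ωRe : ℝ) = 0 := by rw [real_inner_comm]; exact horth
      have e1 : (inner ℝ z ωRe : ℝ) = c1 - y.1 := by
        rw [hz, hc1, inner_sub_left, inner_sub_left, real_inner_smul_left,
          real_inner_smul_left, hRR, hIR]
        ring
      have e2 : (inner ℝ z ωIm : ℝ) = c2 - y.2 := by
        rw [hz, hc2, inner_sub_left, inner_sub_left, real_inner_smul_left,
          real_inner_smul_left, hII, horth]
        ring
      have habs1 : |c1 - y.1| ≤ r := by
        have := abs_real_inner_le_norm z ωRe
        rw [e1, hRe, mul_one] at this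
        linarith
      have habs2 : |c2 - y.2| ≤ r := by
        have := abs_real_inner_le_norm z ωIm
        rw [e2, hIm, mul_one] at this
        linarith
      have hy1m : y.1 ∈ Set.Icc (c1 - r) (c1 + r) := by
        rcases abs_le.1 habs1 with ⟨ha, hb⟩
        exact ⟨by linarith, by linarith⟩
      have hy2m : y.2 ∈ Set.Icc (c2 - r) (c2 + r) := by
        rcases abs_le.1 habs2 with ⟨ha, hb⟩
        exact ⟨by linarith, by linarith⟩
      rw [hh1, hh2, Set.indicator_of_mem hy1m, Set.indicator_of_mem hy2m]
      rw [norm_mul]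
      have hgle : ‖g z‖ ≤ M := hM z
      have hker : ‖(1 / ((y.1 : ℂ) + I * (y.2 : ℂ)))‖ ≤ h y.1 * h y.2 := by
        have hsq : ∀ t : ℝ, h t = (Real.sqrt |t|)⁻¹ := by
          intro t
          rw [hh, Real.sqrt_eq_rpow, ← Real.rpow_neg (abs_nonneg _)]
        have hsq1 : h y.1 = (Real.sqrt |y.1|)⁻¹ := hsq y.1
        have hsq2 : h y.2 = (Real.sqrt |y.2|)⁻¹ := hsq y.2
        have hzc : ‖((y.1 : ℂ) + I * (y.2 : ℂ))‖^2 = y.1^2 + y.2^2 := by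
          rw [Complex.sq_norm, Complex.normSq_apply]
          simp only [Complex.add_re, Complex.add_im, Complex.ofReal_re, Complex.ofReal_im,
            Complex.mul_re, Complex.mul_im, Complex.I_re, Complex.I_im]
          ring
        have hprodpos : 0 < Real.sqrt |y.1| * Real.sqrt |y.2| :=
          mul_pos (Real.sqrt_pos.2 (abs_pos.2 hy1)) (Real.sqrt_pos.2 (abs_pos.2 hy2))
        have hle : Real.sqrt |y.1| * Real.sqrt |y.2| ≤ ‖((y.1 : ℂ) + I * (y.2 : ℂ))‖ := by
          rw [← Real.sqrt_mul (abs_nonneg _)]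
          have h1 : |y.1| * |y.2| ≤ y.1^2 + y.2^2 := by
            nlinarith [sq_nonneg (|y.1| - |y.2|), _root_.sq_abs y.1, _root_.sq_abs y.2, abs_nonneg y.1, abs_nonneg y.2]
          calc Real.sqrt (|y.1| * |y.2|) ≤ Real.sqrt (y.1^2 + y.2^2) := Real.sqrt_le_sqrt h1
            _ = ‖((y.1 : ℂ) + I * (y.2 : ℂ))‖ := by
                rw [← hzc, Real.sqrt_sq (norm_nonneg _)]
        rw [hsq1, hsq2, ← mul_inv, norm_div, norm_one, one_div]
        exact inv_anti₀ hprodpos hle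
      calc ‖(1 / ((y.1 : ℂ) + I * (y.2 : ℂ)))‖ * ‖g z‖
          ≤ (h y.1 * h y.2) * M := by
            apply mul_le_mul hker hgle (norm_nonneg _)
            exact mul_nonneg (hnonneg _) (hnonneg _)
        _ = M * (h y.1 * h y.2) := by ring
  -- put it together
  have hnorm_coeff : ‖(1 / (2 * (Real.pi : ℂ)))‖ = 1 / (2 * Real.pi) := by
    have hc : (1 / (2 * (Real.pi : ℂ))) = ((1 / (2 * Real.pi) : ℝ) : ℂ) := by
      push_cast
      ring
    rw [hc, Complex.norm_real, Real.norm_eq_abs, abs_of_pos (by positivity)]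
  have hI1 : ∫ t, h₁ t ≤ B := by
    rw [hh1, MeasureTheory.integral_indicator measurableSet_Icc, hB, hK]
    exact bound1D hr c1
  have hI2 : ∫ t, h₂ t ≤ B := by
    rw [hh2, MeasureTheory.integral_indicator measurableSet_Icc, hB, hK]
    exact bound1D hr c2
  have hI1nn : 0 ≤ ∫ t, h₁ t := integral_nonneg hh1nn
  have hI2nn : 0 ≤ ∫ t, h₂ t := integral_nonneg hh2nn
  have step1 : ‖NInv ωRe ωIm g x‖
      ≤ (1 / (2 * Real.pi)) * ∫ y : ℝ × ℝ, M * (h₁ y.1 * h₂ y.2) := by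
    rw [NInv, norm_mul, hnorm_coeff]
    apply mul_le_mul_of_nonneg_left _ (by positivity)
    calc ‖∫ y : ℝ × ℝ, (1 / ((y.1 : ℂ) + I * (y.2 : ℂ))) * g (x - y.1 • ωRe - y.2 • ωIm)‖
        ≤ ∫ y : ℝ × ℝ, ‖(1 / ((y.1 : ℂ) + I * (y.2 : ℂ))) * g (x - y.1 • ωRe - y.2 • ωIm)‖ :=
          norm_integral_le_integral_norm _
      _ ≤ ∫ y : ℝ × ℝ, M * (h₁ y.1 * h₂ y.2) :=
          integral_mono_of_nonneg (Filter.Eventually.of_forall fun y => norm_nonneg _)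
            hintG hptwise
  have step2 : ∫ y : ℝ × ℝ, M * (h₁ y.1 * h₂ y.2)
      = M * ((∫ t, h₁ t) * (∫ t, h₂ t)) := by
    rw [MeasureTheory.integral_const_mul]
    congr 1
    rw [Measure.volume_eq_prod _ _, MeasureTheory.integral_prod_mul]
  calc ‖NInv ωRe ωIm g x‖ ≤ (1 / (2 * Real.pi)) * (M * ((∫ t, h₁ t) * (∫ t, h₂ t))) := by
        rw [← step2]; exact step1
    _ ≤ (1 / (2 * Real.pi)) * (M * (B * B)) := by
        apply mul_le_mul_of_nonneg_left _ (by positivity)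
        exact mul_le_mul_of_nonneg_left
          (mul_le_mul hI1 hI2 hI2nn (le_trans hI1nn hI1)) hM0
    _ = (1 / (2 * Real.pi)) * (B * B) * M := by ring

end
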